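/- Let A be an additive commutative group and let a, b : ℕ → A be sequences such that for every n ∈ ℕ, a n = ∑_{k=0}^{⌊n/2⌋} (−1)^k · binom(n−k, k) • b (n−2k) (integer scalar action). Then for every n ∈ ℕ, b n = ∑_{k=0}^{⌊n/2⌋} T(n, n−2k) • a (n−2k), where T(n,m) = binom(n, (n−m)/2) − binom(n, (n−m)/2 − 1) with binom(n, −1) interpreted as 0. -/

import Mathlib

/-- The Catalan triangle numbers: for `m ≤ n` with `n - m` even,
`T(n,m) = binom(n, (n-m)/2) - binom(n, (n-m)/2 - 1)`, where `binom(n, -1)` is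
interpreted as `0`. -/
def catalanT (n m : ℕ) : ℤ :=
  (n.choose ((n - m) / 2) : ℤ) -
    (if (n - m) / 2 = 0 then 0 else (n.choose ((n - m) / 2 - 1) : ℤ))

open Finset

lemma Hbase (p m : ℕ) (hm : m ≤ p) :
    ∑ k ∈ range (m + 1), ((-1 : ℤ) ^ (m - k) * (p.choose k) * ((p - k).choose (m - k)))
      = ((m - 1).choose m : ℤ) := by
  have key : ∀ k ∈ range (m + 1),
      ((-1 : ℤ) ^ (m - k) * (p.choose k) * ((p - k).choose (m - k)))
        = ((-1 : ℤ) ^ m * (p.choose m)) * ((-1) ^ k * (m.choose k)) := by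
    intro k hk
    simp only [mem_range] at hk
    have hk' : k ≤ m := by omega
    have h1 : ((p.choose k : ℤ)) * ((p - k).choose (m - k)) = (p.choose m) * (m.choose k) := by
      have h := Nat.choose_mul (n := p) hk'
      have : ((p.choose m * m.choose k : ℕ) : ℤ) = ((p.choose k * (p - k).choose (m - k) : ℕ) : ℤ) := by
        exact_mod_cast h
      push_cast at this
      linarith
    have h2 : ((-1 : ℤ)) ^ (m - k) * (-1) ^ k = (-1) ^ m := by
      rw [← pow_add]
      congr 1
      omega
    calc ((-1 : ℤ) ^ (m - k) * (p.choose k) * ((p - k).choose (m - k)))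
        = (-1 : ℤ) ^ (m - k) * ((p.choose k : ℤ) * ((p - k).choose (m - k))) := by ring
      _ = (-1 : ℤ) ^ (m - k) * ((p.choose m : ℤ) * (m.choose k)) := by rw [h1]
      _ = ((-1 : ℤ) ^ (m - k) * (-1) ^ k * (-1) ^ k) * ((p.choose m : ℤ) * (m.choose k)) := by
          have : ((-1 : ℤ)) ^ k * (-1) ^ k = 1 := by
            rw [← pow_add]; simp [pow_mul, ← two_mul]
          rw [mul_assoc ((-1 : ℤ) ^ (m - k)), this, mul_one]
      _ = ((-1 : ℤ) ^ m * (p.choose m)) * ((-1) ^ k * (m.choose k)) := by rw [h2]; ring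
  rw [Finset.sum_congr rfl key, ← Finset.mul_sum, Int.alternating_sum_range_choose]
  rcases Nat.eq_zero_or_pos m with rfl | hm0
  · simp
  · rw [if_neg (by omega), mul_zero]
    rw [Nat.choose_eq_zero_of_lt (by omega)]
    simp

lemma Hlem : ∀ N p m : ℕ, m ≤ p → p ≤ N →
    ∑ k ∈ range (m + 1), ((-1 : ℤ) ^ (m - k) * (N.choose k) * ((p - k).choose (m - k)))
      = ((N - p + m - 1).choose m : ℤ) := by
  intro N
  induction N with
  | zero =>
    intro p m hm hp
    have hp0 : p = 0 := by omega
    subst hp0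
    simpa using Hbase 0 m hm
  | succ N ih =>
    intro p m hm hp
    rcases Nat.lt_or_ge p (N + 1) with hpN | hpN
    · have hpN' : p ≤ N := by omega
      rcases Nat.eq_zero_or_pos m with rfl | hm0
      · simp
      · obtain ⟨m', rfl⟩ : ∃ m', m = m' + 1 := ⟨m - 1, by omega⟩
        have hp1 : 1 ≤ p := by omega
        -- peel the main sum
        rw [Finset.sum_range_succ']
        have step : ∀ k ∈ range (m' + 1),
            ((-1 : ℤ) ^ (m' + 1 - (k + 1)) * ((N + 1).choose (k + 1))
              * ((p - (k + 1)).choose (m' + 1 - (k + 1))))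
            = ((-1 : ℤ) ^ (m' - k) * (N.choose k) * ((p - 1 - k).choose (m' - k)))
              + ((-1 : ℤ) ^ (m' - k) * (N.choose (k + 1)) * ((p - 1 - k).choose (m' - k))) := by
          intro k hk
          have e1 : m' + 1 - (k + 1) = m' - k := by omega
          have e2 : p - (k + 1) = p - 1 - k := by omega
          rw [e1, e2, Nat.choose_succ_succ]
          push_cast
          ring
        rw [Finset.sum_congr rfl step, Finset.sum_add_distrib]
        -- first summand is IH2 = ih (p-1) m'
        have IH2 := ih (p - 1) m' (by omega) (by omega)
        -- second summand + f 0 is IH1 = ih p (m'+1), peeled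
        have IH1 := ih p (m' + 1) hm hpN'
        rw [Finset.sum_range_succ'] at IH1
        have step2 : ∀ k ∈ range (m' + 1),
            ((-1 : ℤ) ^ (m' + 1 - (k + 1)) * (N.choose (k + 1))
              * ((p - (k + 1)).choose (m' + 1 - (k + 1))))
            = ((-1 : ℤ) ^ (m' - k) * (N.choose (k + 1)) * ((p - 1 - k).choose (m' - k))) := by
          intro k hk
          have e1 : m' + 1 - (k + 1) = m' - k := by omega
          have e2 : p - (k + 1) = p - 1 - k := by omega
          rw [e1, e2]
        rw [Finset.sum_congr rfl step2] at IH1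
        -- now combine
        have f0eq : ((-1 : ℤ) ^ (m' + 1 - 0) * ((N + 1).choose 0) * ((p - 0).choose (m' + 1 - 0)))
            = ((-1 : ℤ) ^ (m' + 1 - 0) * (N.choose 0) * ((p - 0).choose (m' + 1 - 0))) := by
          simp
        rw [f0eq]
        have e3 : N - (p - 1) + m' - 1 = N - p + m' := by omega
        rw [e3] at IH2
        have e5 : N - p + (m' + 1) - 1 = N - p + m' := by omega
        rw [e5] at IH1
        have e4 : N + 1 - p + (m' + 1) - 1 = (N - p + m') + 1 := by omega
        rw [e4, Nat.choose_succ_succ (N - p + m') m']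
        simp only [Nat.sub_zero] at IH1 ⊢
        push_cast
        linarith [IH1, IH2]
    · have hpe : p = N + 1 := by omega
      subst hpe
      rw [Hbase (N + 1) m hm]
      congr 2
      omega

lemma deltaLem (n m : ℕ) (h2 : 2 * m ≤ n) :
    ∑ k ∈ range (m + 1),
        catalanT n (n - 2 * k) * ((-1 : ℤ) ^ (m - k) * ((n - 2 * k - (m - k)).choose (m - k)))
      = if m = 0 then 1 else 0 := by
  have hcat : ∀ k, k ≤ m → catalanT n (n - 2 * k)
      = (n.choose k : ℤ) - (if k = 0 then 0 else (n.choose (k - 1) : ℤ)) := by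
    intro k hk
    unfold catalanT
    have e : (n - (n - 2 * k)) / 2 = k := by omega
    rw [e]
  have split : ∀ k ∈ range (m + 1),
      catalanT n (n - 2 * k) * ((-1 : ℤ) ^ (m - k) * ((n - 2 * k - (m - k)).choose (m - k)))
      = ((-1 : ℤ) ^ (m - k) * (n.choose k) * ((n - m - k).choose (m - k)))
        - ((if k = 0 then 0 else (n.choose (k - 1) : ℤ))
            * ((-1 : ℤ) ^ (m - k) * ((n - m - k).choose (m - k)))) := by
    intro k hk
    simp only [mem_range] at hk
    have e2 : n - 2 * k - (m - k) = n - m - k := by omega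
    rw [hcat k (by omega), e2]
    ring
  rw [Finset.sum_congr rfl split, Finset.sum_sub_distrib]
  have hA := Hlem n (n - m) m (by omega) (by omega)
  have eA : ∀ k ∈ range (m + 1),
      ((-1 : ℤ) ^ (m - k) * (n.choose k) * ((n - m - k).choose (m - k)))
        = ((-1 : ℤ) ^ (m - k) * (n.choose k) * (((n - m) - k).choose (m - k))) := by
    intro k hk; rfl
  rw [hA]
  rcases Nat.eq_zero_or_pos m with rfl | hm0
  · simp
  · rw [if_neg (by omega)]
    obtain ⟨m', rfl⟩ : ∃ m', m = m' + 1 := ⟨m - 1, by omega⟩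
    -- second sum: peel k = 0 (which is zero)
    rw [Finset.sum_range_succ']
    simp only [if_pos rfl, zero_mul, add_zero]
    have step : ∀ k ∈ range (m' + 1),
        ((if k + 1 = 0 then 0 else (n.choose (k + 1 - 1) : ℤ))
          * ((-1 : ℤ) ^ (m' + 1 - (k + 1)) * ((n - (m' + 1) - (k + 1)).choose (m' + 1 - (k + 1)))))
        = ((-1 : ℤ) ^ (m' - k) * (n.choose k) * (((n - m' - 2) - k).choose (m' - k))) := by
      intro k hk
      rw [if_neg (by omega)]
      have e1 : m' + 1 - (k + 1) = m' - k := by omega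
      have e2 : n - (m' + 1) - (k + 1) = (n - m' - 2) - k := by omega
      have e3 : k + 1 - 1 = k := by omega
      rw [e1, e2, e3]
      ring
    rw [Finset.sum_congr rfl step, Hlem n (n - m' - 2) m' (by omega) (by omega)]
    have i1 : n - (n - (m' + 1)) + (m' + 1) - 1 = 2 * m' + 1 := by omega
    have i2 : n - (n - m' - 2) + m' - 1 = 2 * m' + 1 := by omega
    rw [i1, i2]
    have : (2 * m' + 1).choose (m' + 1) = (2 * m' + 1).choose m' := by
      rw [← Nat.choose_symm (by omega : m' + 1 ≤ 2 * m' + 1)]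
      congr 1
      omega
    rw [this]
    simp

lemma triLem {M : Type*} [AddCommMonoid M] (N : ℕ) (g : ℕ → ℕ → M) :
    ∑ k ∈ range (N + 1), ∑ j ∈ range (N - k + 1), g k j
      = ∑ m ∈ range (N + 1), ∑ k ∈ range (m + 1), g k (m - k) := by
  rw [Finset.sum_sigma', Finset.sum_sigma']
  refine Finset.sum_nbij' (fun x => ⟨x.1 + x.2, x.1⟩) (fun x => ⟨x.2, x.1 - x.2⟩)
    ?_ ?_ ?_ ?_ ?_
  · rintro ⟨k, j⟩ hx
    simp only [Finset.mem_sigma, Finset.mem_range] at hx ⊢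
    omega
  · rintro ⟨m, k⟩ hx
    simp only [Finset.mem_sigma, Finset.mem_range] at hx ⊢
    omega
  · rintro ⟨k, j⟩ hx
    simp only [Finset.mem_sigma, Finset.mem_range] at hx
    show (⟨k, k + j - k⟩ : Σ _ : ℕ, ℕ) = ⟨k, j⟩
    have : k + j - k = j := by omega
    rw [this]
  · rintro ⟨m, k⟩ hx
    simp only [Finset.mem_sigma, Finset.mem_range] at hx
    show (⟨k + (m - k), k⟩ : Σ _ : ℕ, ℕ) = ⟨m, k⟩
    have : k + (m - k) = m := by omega
    rw [this]
  · rintro ⟨k, j⟩ hx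
    simp only [Finset.mem_sigma, Finset.mem_range] at hx
    simp only [Nat.add_sub_cancel_left]

/-- If `a n = ∑_{k=0}^{⌊n/2⌋} (-1)^k binom(n-k,k) • b (n-2k)` for all `n`,
then `b n = ∑_{k=0}^{⌊n/2⌋} T(n, n-2k) • a (n-2k)` for all `n`. -/
theorem stmt6 {A : Type*} [AddCommGroup A] (a b : ℕ → A)
    (h : ∀ n : ℕ, a n = ∑ k ∈ Finset.range (n / 2 + 1),
      ((-1) ^ k * ((n - k).choose k : ℤ)) • b (n - 2 * k)) :
    ∀ n : ℕ, b n = ∑ k ∈ Finset.range (n / 2 + 1),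
      catalanT n (n - 2 * k) • a (n - 2 * k) := by
  intro n
  symm
  have expand : ∀ k ∈ range (n / 2 + 1),
      catalanT n (n - 2 * k) • a (n - 2 * k)
        = ∑ j ∈ range (n / 2 - k + 1),
            (catalanT n (n - 2 * k) * ((-1 : ℤ) ^ j * ((n - 2 * k - j).choose j)))
              • b (n - 2 * (k + j)) := by
    intro k hk
    simp only [mem_range] at hk
    rw [h (n - 2 * k), Finset.smul_sum]
    have e1 : (n - 2 * k) / 2 = n / 2 - k := by omega
    rw [e1]
    refine Finset.sum_congr rfl fun j hj => ?_
    simp only [mem_range] at hj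
    rw [smul_smul]
    have e2 : n - 2 * k - 2 * j = n - 2 * (k + j) := by omega
    rw [e2]
  rw [Finset.sum_congr rfl expand]
  rw [triLem (n / 2) (fun k j =>
      (catalanT n (n - 2 * k) * ((-1 : ℤ) ^ j * ((n - 2 * k - j).choose j)))
        • b (n - 2 * (k + j)))]
  have inner : ∀ m ∈ range (n / 2 + 1),
      (∑ k ∈ range (m + 1),
        (catalanT n (n - 2 * k) * ((-1 : ℤ) ^ (m - k) * ((n - 2 * k - (m - k)).choose (m - k))))
          • b (n - 2 * (k + (m - k))))
      = (if m = 0 then (1 : ℤ) else 0) • b (n - 2 * m) := by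
    intro m hm
    simp only [mem_range] at hm
    have hb : ∀ k ∈ range (m + 1), (n - 2 * (k + (m - k))) = n - 2 * m := by
      intro k hk; simp only [mem_range] at hk; congr 1; omega
    calc (∑ k ∈ range (m + 1),
        (catalanT n (n - 2 * k) * ((-1 : ℤ) ^ (m - k) * ((n - 2 * k - (m - k)).choose (m - k))))
          • b (n - 2 * (k + (m - k))))
        = ∑ k ∈ range (m + 1),
            (catalanT n (n - 2 * k) * ((-1 : ℤ) ^ (m - k) * ((n - 2 * k - (m - k)).choose (m - k))))
              • b (n - 2 * m) := by
          refine Finset.sum_congr rfl fun k hk => ?_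
          rw [hb k hk]
      _ = (∑ k ∈ range (m + 1),
            catalanT n (n - 2 * k) * ((-1 : ℤ) ^ (m - k) * ((n - 2 * k - (m - k)).choose (m - k))))
              • b (n - 2 * m) := by
          rw [Finset.sum_smul]
      _ = (if m = 0 then (1 : ℤ) else 0) • b (n - 2 * m) := by
          rw [deltaLem n m (by omega)]
  rw [Finset.sum_congr rfl inner]
  rw [Finset.sum_eq_single_of_mem 0 (by simp)]
  · simp
  · intro m hm hm0
    rw [if_neg hm0, zero_smul]
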